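/- arXiv:2401.12299 — 4 statements merged into one kernel-verified Lean document; each statement's English description precedes it below -/
import Mathlib

section
/- (Projection estimate, Lemma 4.2.) Fix r ≥ 0 and b ∈ (0,1]. There exist ζ₀ ∈ (0,1) and C > 0, depending only on r and b, such that for all ζ ∈ (0, ζ₀) the following holds. Let g be a complete geodesic in ℍ and let u ∈ ℍ satisfy d(u,g) ≤ r. Suppose h is a complete geodesic that is ζ-Hausdorff-close to g on the closed ball of radius b·log(1/ζ) centered at u. Then for every closest-point projection p of u to g and every closest-point projection q of u to h, one has dist(p,q) ≤ C·ζ^{1+b}. -/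
open Metric

/-- A complete geodesic in the hyperbolic plane `ℍ`: the range of an isometric
embedding `ℝ → ℍ`. -/
def IsCompleteGeodesic (g : Set UpperHalfPlane) : Prop :=
  ∃ γ : ℝ → UpperHalfPlane, Isometry γ ∧ g = Set.range γ

/-- The sets `a` and `b` lie in one and the same connected component of the
complement of `g`. -/
def SameSideOf (g a b : Set UpperHalfPlane) : Prop :=
  ∃ x ∈ gᶜ, a ⊆ connectedComponentIn gᶜ x ∧ b ⊆ connectedComponentIn gᶜ x

/-- A pairwise disjoint non-separating triple of complete geodesics in `ℍ`:
the three sets are complete geodesics, pairwise disjoint, and for each `i`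
the other two geodesics lie in one and the same connected component of the
complement of `gᵢ`. -/
def NonSepTriple (g₁ g₂ g₃ : Set UpperHalfPlane) : Prop :=
  IsCompleteGeodesic g₁ ∧ IsCompleteGeodesic g₂ ∧ IsCompleteGeodesic g₃ ∧
  Disjoint g₁ g₂ ∧ Disjoint g₁ g₃ ∧ Disjoint g₂ g₃ ∧
  SameSideOf g₁ g₂ g₃ ∧ SameSideOf g₂ g₁ g₃ ∧ SameSideOf g₃ g₁ g₂

/-- `u` is a center of the triple `(g₁, g₂, g₃)`: it is equidistant from the
three geodesics. -/
def IsCenter (u : UpperHalfPlane) (g₁ g₂ g₃ : Set UpperHalfPlane) : Prop :=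
  infDist u g₁ = infDist u g₂ ∧ infDist u g₂ = infDist u g₃

/-- The geodesics `g` and `h` are `ζ`-Hausdorff-close on the set `B`. -/
def HClose (g h B : Set UpperHalfPlane) (ζ : ℝ) : Prop :=
  (g ∩ B).Nonempty ∧ (h ∩ B).Nonempty ∧ hausdorffDist (g ∩ B) (h ∩ B) ≤ ζ

open Metric Real

noncomputable section
namespace ProjEst


abbrev V := ℝ × ℝ × ℝ

def L (P Q : V) : ℝ := P.1 * Q.1 - P.2.1 * Q.2.1 - P.2.2 * Q.2.2

def vec (z : UpperHalfPlane) : V :=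
  (((z.re)^2 + (z.im)^2 + 1) / (2 * z.im), z.re / z.im,
   ((z.re)^2 + (z.im)^2 - 1) / (2 * z.im))

lemma L_symm (P Q : V) : L P Q = L Q P := by simp [L]; ring

lemma L_vec (z w : UpperHalfPlane) : L (vec z) (vec w) = Real.cosh (dist z w) := by
  rw [UpperHalfPlane.cosh_dist]
  have hz : (0:ℝ) < z.im := z.im_pos
  have hw : (0:ℝ) < w.im := w.im_pos
  have hd : dist (z : ℂ) w ^ 2 = (z.re - w.re)^2 + (z.im - w.im)^2 := by
    rw [Complex.dist_eq]
    rw [← Complex.normSq_eq_norm_sq]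
    simp [Complex.normSq_apply, UpperHalfPlane.coe_re, UpperHalfPlane.coe_im]; ring
  rw [hd, L, vec, vec]
  field_simp
  ring





def cross (P Q : V) : V :=
  (P.2.1 * Q.2.2 - P.2.2 * Q.2.1, P.1 * Q.2.2 - P.2.2 * Q.1, P.2.1 * Q.1 - P.1 * Q.2.1)

lemma L_cross_left (P Q : V) : L (cross P Q) P = 0 := by simp [L, cross]; ring
lemma L_cross_right (P Q : V) : L (cross P Q) Q = 0 := by simp [L, cross]; ring
lemma L_cross_self (P Q : V) : L (cross P Q) (cross P Q) = L P P * L Q Q - (L P Q)^2 := by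
  simp [L, cross]; ring
lemma parseval_raw (Z P Q : V) :
    (L Z (cross P Q))^2 =
      L Z Z * (L P P * L Q Q - (L P Q)^2)
      - L Z P * (L Z P * L Q Q - L P Q * L Z Q)
      + L Z Q * (L Z P * L P Q - L P P * L Z Q) := by
  simp [L, cross]; ring

/-- Parseval for an orthonormal (Lorentz) pair. -/
lemma parseval (Z P Q : V) (hP : L P P = 1) (hQ : L Q Q = -1) (hPQ : L P Q = 0) :
    (L Z P)^2 - (L Z Q)^2 - (L Z (cross P Q))^2 = L Z Z := by
  have := parseval_raw Z P Q
  rw [hP, hQ, hPQ] at this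
  linarith [this]

lemma L_bilin (x y : ℝ) (P Q R : V) :
    L (x • P + y • Q) R = x * L P R + y * L Q R := by
  simp [L, Prod.smul_def, Prod.add_def, smul_eq_mul]; ring

lemma L_bilin_right (x y : ℝ) (P Q R : V) :
    L R (x • P + y • Q) = x * L R P + y * L R Q := by
  simp [L, Prod.smul_def, Prod.add_def, smul_eq_mul]; ring

/-- Bilinear Parseval. -/
lemma parseval₂ (Z W P Q : V) (hP : L P P = 1) (hQ : L Q Q = -1) (hPQ : L P Q = 0) :
    L Z P * L W P - L Z Q * L W Q - L Z (cross P Q) * L W (cross P Q) = L Z W := by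
  have h1 := parseval (Z + W) P Q hP hQ hPQ
  have h2 := parseval Z P Q hP hQ hPQ
  have h3 := parseval W P Q hP hQ hPQ
  have e : ∀ R : V, L (Z + W) R = L Z R + L W R := by intro R; simp [L]; ring
  have e2 : ∀ R : V, L R (Z + W) = L R Z + L R W := by intro R; simp [L]; ring
  rw [e P, e Q, e (cross P Q), e (Z + W), e2 Z, e2 W] at h1
  have hs : ∀ R S : V, L R S = L S R := by intro R S; simp [L]; ring
  rw [hs W Z] at h1
  nlinarith [h1, h2, h3]

lemma null_orth {A Y : V} (hA : L A A = 1) (h1 : L Y A = 0) (h2 : L Y Y = 0) : Y = 0 := by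
  obtain ⟨a0, a1, a2⟩ := A
  obtain ⟨y0, y1, y2⟩ := Y
  simp only [L] at hA h1 h2
  have e1 : y0 * a0 = y1 * a1 + y2 * a2 := by linarith
  have e2 : (y1*a1 + y2*a2) * (y1*a1 + y2*a2) ≤ (y1*y1 + y2*y2) * (a1*a1 + a2*a2) := by
    nlinarith [sq_nonneg (y1*a2 - y2*a1)]
  have e2b : y0*y0*(a0*a0) = (y1*a1 + y2*a2) * (y1*a1 + y2*a2) := by rw [← e1]; ring
  have hy : y1*y1 + y2*y2 = y0*y0 := by linarith
  have ha : a1*a1 + a2*a2 = a0*a0 - 1 := by linarith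
  have hp : (y1*y1+y2*y2)*(a1*a1+a2*a2) = y0*y0*(a0*a0-1) := by rw [hy, ha]
  have e3 : y0 * y0 ≤ 0 := by nlinarith [e2, e2b, hp]
  have e4 : y0 * y0 = 0 := le_antisymm e3 (mul_self_nonneg y0)
  have key : y0 = 0 := mul_self_eq_zero.mp e4
  have hy1 : y1 * y1 = 0 := by nlinarith [mul_self_nonneg y2]
  have hy2 : y2 * y2 = 0 := by nlinarith [mul_self_nonneg y1]
  have k1 : y1 = 0 := mul_self_eq_zero.mp hy1
  have k2 : y2 = 0 := mul_self_eq_zero.mp hy2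
  simp [key, k1, k2]




lemma L_vec_self (z : UpperHalfPlane) : L (vec z) (vec z) = 1 := by rw [L_vec]; simp

lemma L_comb_right (c s : ℝ) (Z A B : V) :
    L Z (c • A + s • B) = c * L Z A + s * L Z B := by
  simp [L, Prod.smul_def, Prod.add_def, smul_eq_mul]; ring

lemma L_comb_left (c s : ℝ) (Z A B : V) :
    L (c • A + s • B) Z = c * L A Z + s * L B Z := by
  simp [L, Prod.smul_def, Prod.add_def, smul_eq_mul]; ring

lemma L_sub_left (P Q R : V) : L (P - Q) R = L P R - L Q R := by
  simp [L, Prod.sub_def]; ring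

lemma L_sub_right (P Q R : V) : L R (P - Q) = L R P - L R Q := by
  simp [L, Prod.sub_def]; ring

lemma L_smul_right (x : ℝ) (P Q : V) : L P (x • Q) = x * L P Q := by
  simp [L, Prod.smul_def, smul_eq_mul]; ring

lemma LV (γ : ℝ → UpperHalfPlane) (hγ : Isometry γ) (s t : ℝ) :
    L (vec (γ s)) (vec (γ t)) = Real.cosh (s - t) := by
  rw [L_vec, hγ.dist_eq, Real.dist_eq, Real.cosh_abs]

/-- Normal form for a geodesic in the hyperboloid model. -/
theorem exists_frame (γ : ℝ → UpperHalfPlane) (hγ : Isometry γ) :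
    ∃ B : V, L B B = -1 ∧ L (vec (γ 0)) B = 0 ∧
      (∀ t, L (vec (γ t)) B = - Real.sinh t) ∧
      ∀ t, vec (γ t) = (Real.cosh t) • (vec (γ 0)) + (Real.sinh t) • B := by
  have s1 : Real.sinh 1 > 0 := by
    have := Real.sinh_pos_iff.mpr (by norm_num : (0:ℝ) < 1); linarith
  set A := vec (γ 0) with hA
  set B : V := (2 * Real.sinh 1)⁻¹ • (vec (γ 1) - vec (γ (-1))) with hB
  have hXB : ∀ t, L (vec (γ t)) B = - Real.sinh t := by
    intro t
    rw [hB, L_smul_right, L_sub_right, LV γ hγ, LV γ hγ]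
    have h1 : Real.cosh (t - 1) - Real.cosh (t - (-1)) = -(2 * Real.sinh t * Real.sinh 1) := by
      rw [Real.cosh_sub, show t - (-1) = t + 1 by ring, Real.cosh_add]; ring
    rw [h1]
    field_simp
  have hAB : L A B = 0 := by
    have := hXB 0; simpa using this
  have hBB : L B B = -1 := by
    have e1 : L B (vec (γ 1)) = - Real.sinh 1 := by rw [← L_symm (vec (γ 1)) B, hXB 1]
    have e2 : L B (vec (γ (-1))) = Real.sinh 1 := by
      rw [← L_symm (vec (γ (-1))) B, hXB (-1)]; simp
    calc L B B = L B ((2 * Real.sinh 1)⁻¹ • (vec (γ 1) - vec (γ (-1)))) := by rw [← hB]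
      _ = (2 * Real.sinh 1)⁻¹ * (L B (vec (γ 1)) - L B (vec (γ (-1)))) := by
          rw [L_smul_right, L_sub_right]
      _ = -1 := by rw [e1, e2]; field_simp; ring
  refine ⟨B, hBB, hAB, hXB, ?_⟩
  intro t
  set Y : V := vec (γ t) - ((Real.cosh t) • A + (Real.sinh t) • B) with hY
  have hXA : L (vec (γ t)) A = Real.cosh t := by
    rw [hA, LV γ hγ]; simp
  have hYA : L Y A = 0 := by
    rw [hY, L_sub_left, L_comb_left, hXA, L_vec_self]
    rw [L_symm B A, hAB]; ring
  have hYY : L Y Y = 0 := by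
    rw [hY, L_sub_left, L_sub_right, L_sub_right, L_comb_left, L_comb_left,
        L_comb_right, L_comb_right, L_comb_right]
    rw [hXA, hXB t, L_vec_self, L_symm A (vec (γ t)), hXA, L_symm B (vec (γ t)), hXB t,
        hAB, L_symm B A, hAB, hBB]
    have hAA : L A A = 1 := by rw [hA]; exact L_vec_self _
    rw [hAA]
    nlinarith [Real.cosh_sq t]
  have := null_orth (by rw [hA]; exact L_vec_self _) hYA hYY
  have : vec (γ t) - ((Real.cosh t) • A + (Real.sinh t) • B) = 0 := this
  have := sub_eq_zero.mp this
  exact this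



lemma sinh_nonneg' {t : ℝ} (h : 0 ≤ t) : 0 ≤ Real.sinh t := by
  simpa using Real.sinh_le_sinh.mpr h

lemma sinh_le_texp {t : ℝ} (ht : 0 ≤ t) : Real.sinh t ≤ t * Real.exp t := by
  rw [Real.sinh_eq]
  have h1 : 1 - t ≤ Real.exp (-t) := by linarith [Real.add_one_le_exp (-t)]
  have h2 : 1 ≤ Real.exp t := Real.one_le_exp ht
  have hprod : Real.exp (-t) * Real.exp t = 1 := by rw [← Real.exp_add]; simp
  nlinarith [Real.exp_pos t, Real.exp_pos (-t)]

lemma cosh_quad (t : ℝ) : 1 + t^2/2 ≤ Real.cosh t := by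
  have h := Real.cosh_abs t
  have ht : 0 ≤ |t| := abs_nonneg t
  have h3 : |t|/2 ≤ Real.sinh (|t|/2) := Real.self_le_sinh_iff.mpr (by positivity)
  have h4 : Real.cosh t = 2 * Real.sinh (|t|/2)^2 + 1 := by
    calc Real.cosh t = Real.cosh |t| := h.symm
      _ = Real.cosh (2 * (|t|/2)) := by rw [show 2*(|t|/2) = |t| by ring]
      _ = 2 * Real.sinh (|t|/2)^2 + 1 := by rw [Real.cosh_two_mul, Real.cosh_sq']; ring
  nlinarith [sq_abs t]

lemma half_exp_le_cosh (t : ℝ) : Real.exp t / 2 ≤ Real.cosh t := by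
  rw [Real.cosh_eq]; linarith [Real.exp_pos (-t)]

lemma quarter_exp_le_sinh {t : ℝ} (ht : 1 ≤ t) : Real.exp t / 4 ≤ Real.sinh t := by
  rw [Real.sinh_eq]
  have h1 : Real.exp (-t) ≤ 1 := Real.exp_le_one_iff.mpr (by linarith)
  have h2 : 2 ≤ Real.exp t := by linarith [Real.add_one_le_exp t]
  linarith

lemma cosh_le_exp {t : ℝ} (ht : 0 ≤ t) : Real.cosh t ≤ Real.exp t := by
  rw [Real.cosh_eq]
  have : Real.exp (-t) ≤ Real.exp t := Real.exp_le_exp.mpr (by linarith)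
  linarith

lemma cosh_mul_cosh_le {a c : ℝ} (ha : 0 ≤ a) (hc : 0 ≤ c) :
    Real.cosh a * Real.cosh c ≤ Real.cosh (a + c) := by
  rw [Real.cosh_add]
  nlinarith [sinh_nonneg' ha, sinh_nonneg' hc]

lemma exp100 : (2401:ℝ) ≤ Real.exp 100 := by
  have h : (51:ℝ) ≤ Real.exp 50 := by linarith [Real.add_one_le_exp 50]
  have h2 : Real.exp 100 = Real.exp 50 * Real.exp 50 := by rw [← Real.exp_add]; norm_num
  nlinarith

open Metric Real

section
variable {α : Type*} [MetricSpace α]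

lemma extract_close {S T : Set α} (hS : S.Nonempty) (hT : T.Nonempty)
    (hSb : Bornology.IsBounded S) (hTb : Bornology.IsBounded T)
    {ζ : ℝ} (hζ : 0 < ζ) (hH : hausdorffDist S T ≤ ζ) {x : α} (hx : x ∈ S) :
    ∃ y ∈ T, dist x y ≤ 2 * ζ := by
  have fin := hausdorffEdist_ne_top_of_nonempty_of_bounded hS hT hSb hTb
  have h1 : infDist x T ≤ ζ := le_trans (infDist_le_hausdorffDist_of_mem hx fin) hH
  have h2 : infDist x T < 2 * ζ := lt_of_le_of_lt h1 (by linarith)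
  obtain ⟨y, hy, hd⟩ := (infDist_lt_iff hT).mp h2
  exact ⟨y, hy, hd.le⟩

end

-- minimizer derivative lemma
lemma min_coeff_zero (α β : ℝ) (hmin : ∀ t : ℝ, α ≤ α * Real.cosh t + β * Real.sinh t) :
    β = 0 := by
  have hd : HasDerivAt (fun t => α * Real.cosh t + β * Real.sinh t)
      (α * Real.sinh 0 + β * Real.cosh 0) 0 :=
    ((Real.hasDerivAt_cosh 0).const_mul α).add ((Real.hasDerivAt_sinh 0).const_mul β)
  have hloc : IsLocalMin (fun t => α * Real.cosh t + β * Real.sinh t) 0 := by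
    apply IsMinOn.isLocalMin (s := Set.univ)
    · intro t _
      simpa using hmin t
    · exact Filter.univ_mem
  have := hloc.deriv_eq_zero
  rw [hd.deriv] at this
  simpa using this

set_option maxHeartbeats 3000000

lemma key_step (x y z μ ν τ X Y m n : ℝ)
    (hx : x^2 ≤ X) (hy : y^2 ≤ Y) (hX : 0 ≤ X) (hY : 0 ≤ Y) (hm : 0 ≤ m) (hn : 0 ≤ n)
    (hμ : μ^2 ≤ m) (hν : ν^2 ≤ n) (hτ : 1/2 ≤ τ^2)
    (e : x*μ - y*ν - z*τ = 0) :
    z^2 ≤ 4*(X*m + Y*n) := by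
  have h1 : z^2*τ^2 = (x*μ - y*ν)^2 := by linear_combination (-(z*τ + x*μ - y*ν)) * e
  have h2 : (x*μ - y*ν)^2 ≤ 2*(x^2*μ^2) + 2*(y^2*ν^2) := by nlinarith [sq_nonneg (x*μ + y*ν)]
  have h3 : x^2*μ^2 ≤ X*m := by nlinarith [sq_nonneg x, sq_nonneg μ]
  have h4 : y^2*ν^2 ≤ Y*n := by nlinarith [sq_nonneg y, sq_nonneg ν]
  nlinarith [sq_nonneg z]

lemma endgame (K η a bb cc a2 b2 c2 μ ν τ : ℝ)
    (hK : 1 ≤ K)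
    (hη : 0 ≤ η) (hηs : η ≤ 1/100)
    (haK : a ≤ K) (ha1 : 1 ≤ a)
    (hμ : μ^2 ≤ η^2) (hν : ν^2 ≤ η^2)
    (i : a^2 - bb^2 - cc^2 = 1)
    (iii : b2^2 = 1 + bb^2 - ν^2)
    (iv : τ^2 = 1 + μ^2 - ν^2)
    (v : a*μ - bb*ν - cc*τ = 0)
    (vi : a2*μ - b2*ν - c2*τ = 0)
    (vii : a2^2 ≤ c2^2)
    (viii : a*a2 - bb*b2 - cc*c2 = 0) :
    a - 1 ≤ 74 * K^4 * η^2 := by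
  have hK2 : (1:ℝ) ≤ K^2 := by nlinarith
  have hK4 : K^2 ≤ K^4 := by nlinarith
  have hη2 : η^2 ≤ 1/10000 := by nlinarith
  have haa : a^2 ≤ K^2 := by nlinarith
  have hbb : bb^2 ≤ K^2 := by nlinarith [sq_nonneg cc]
  have hτ2 : 1/2 ≤ τ^2 := by nlinarith
  have hb2 : 1/2 ≤ b2^2 := by nlinarith [sq_nonneg bb]
  have hb2u : b2^2 ≤ 1 + K^2 := by nlinarith [sq_nonneg ν]
  have hcc : cc^2 ≤ 8*K^2*η^2 := by
    have := key_step a bb cc μ ν τ (K^2) (K^2) (η^2) (η^2) haa hbb (by positivity)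
      (by positivity) (by positivity) (by positivity) hμ hν hτ2 v
    nlinarith [this]
  have hc2' := key_step a2 b2 c2 μ ν τ (c2^2) (1+K^2) (η^2) (η^2) vii hb2u
    (by positivity) (by positivity) (by positivity) (by positivity) hμ hν hτ2 vi
  have hc2 : c2^2 ≤ 16*K^2*η^2 := by nlinarith [sq_nonneg c2, sq_nonneg η]
  have ha2 : a2^2 ≤ 16*K^2*η^2 := le_trans vii hc2
  have hbb' := key_step a cc bb a2 c2 b2 (K^2) (8*K^2*η^2) (16*K^2*η^2) (16*K^2*η^2)
    haa hcc (by positivity) (by positivity) (by positivity) (by positivity)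
    ha2 hc2 hb2 (by linear_combination viii)
  have hq : (0:ℝ) ≤ K^4*η^2 := by positivity
  have h512 : 512*(K^2*η^2)*(K^2*η^2) ≤ K^4*η^2 := by nlinarith [hq]
  have hbbf : bb^2 ≤ 65*K^4*η^2 := by nlinarith [hbb']
  nlinarith [i, hcc, hbbf, ha1, hK4, sq_nonneg η]


end ProjEst

open Metric ProjEst Real

namespace ProjEst

/-- recentred isometry -/
lemma recenter {g : Set UpperHalfPlane} (hg : IsCompleteGeodesic g) {p : UpperHalfPlane}
    (hp : p ∈ g) :
    ∃ γ : ℝ → UpperHalfPlane, Isometry γ ∧ γ 0 = p ∧ (∀ t, γ t ∈ g) ∧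
      ∀ y ∈ g, ∃ s, γ s = y := by
  obtain ⟨γ0, hγ0, hgr⟩ := hg
  rw [hgr] at hp
  obtain ⟨tp, htp⟩ := hp
  have htrans : Isometry (fun t : ℝ => t + tp) :=
    Isometry.of_dist_eq (fun a c => by rw [Real.dist_eq, Real.dist_eq]; ring_nf)
  refine ⟨fun t => γ0 (t + tp), hγ0.comp htrans, by simpa using htp, ?_, ?_⟩
  · intro t; rw [hgr]; exact Set.mem_range_self _
  · intro y hy
    rw [hgr] at hy
    obtain ⟨s0, hs0⟩ := hy
    exact ⟨s0 - tp, by simpa [sub_add_cancel] using hs0⟩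

/-- The distance from `u` attains its min over the geodesic at `γ 0` forces the
`B`-coefficient of `U` to vanish, and gives the value `cosh (dist u (γ 0))`. -/
lemma min_frame {γ : ℝ → UpperHalfPlane} (hγ : Isometry γ) {g : Set UpperHalfPlane}
    (hmem : ∀ t, γ t ∈ g) (u : UpperHalfPlane)
    (hmin : dist u (γ 0) = infDist u g)
    {B : V} (hframe : ∀ t, vec (γ t) = (Real.cosh t) • (vec (γ 0)) + (Real.sinh t) • B) :
    L (vec u) B = 0 := by
  apply min_coeff_zero (L (vec u) (vec (γ 0)))
  intro t
  have h1 : dist u (γ 0) ≤ dist u (γ t) := hmin ▸ infDist_le_dist_of_mem (hmem t)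
  have h2 : Real.cosh (dist u (γ 0)) ≤ Real.cosh (dist u (γ t)) := by
    rw [Real.cosh_le_cosh, abs_of_nonneg dist_nonneg, abs_of_nonneg dist_nonneg]; exact h1
  have h3 : L (vec u) (vec (γ t)) = Real.cosh t * L (vec u) (vec (γ 0))
      + Real.sinh t * L (vec u) B := by rw [hframe t, L_comb_right]
  calc L (vec u) (vec (γ 0)) = Real.cosh (dist u (γ 0)) := L_vec u _
    _ ≤ Real.cosh (dist u (γ t)) := h2
    _ = L (vec u) (vec (γ t)) := (L_vec u _).symm
    _ = _ := by rw [h3]; ring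

end ProjEst


namespace ProjEst
open Metric Real
set_option maxHeartbeats 3000000

lemma w_bound_V (Z Yv A' Bh : V) (cs ss D S : ℝ)
    (hA'A' : L A' A' = 1) (hBhBh : L Bh Bh = -1) (hA'Bh : L A' Bh = 0)
    (hcs : cs^2 = ss^2 + 1)
    (hYv : Yv = cs • A' + ss • Bh)
    (hZZ : L Z Z = 1)
    (hv1 : 1 ≤ L Z Yv) (hvD : L Z Yv ≤ D) (hD2 : D^2 = S^2 + 1) :
    (L Z (cross A' Bh))^2 ≤ S^2 := by
  have hpars := parseval Z A' Bh hA'A' hBhBh hA'Bh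
  rw [hZZ] at hpars
  have hv : L Z Yv = cs * L Z A' + ss * L Z Bh := by rw [hYv, L_comb_right]
  have h2 : (L Z A')^2 - (L Z Bh)^2 ≤ (L Z Yv)^2 := by
    rw [hv]
    nlinarith [sq_nonneg (ss * L Z A' + cs * L Z Bh)]
  have h4 : (L Z Yv)^2 ≤ D^2 := by nlinarith
  nlinarith

lemma coeff_eta (T ζ μ ν : ℝ) (hT : 1 ≤ T) (hζ0 : 0 < ζ) (hζs : ζ ≤ 1/2)
    (hP : (Real.cosh T * μ + Real.sinh T * ν)^2 ≤ Real.sinh (2*ζ)^2)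
    (hM : (Real.cosh T * μ - Real.sinh T * ν)^2 ≤ Real.sinh (2*ζ)^2) :
    μ^2 ≤ (24*ζ*Real.exp (-T))^2 ∧ ν^2 ≤ (24*ζ*Real.exp (-T))^2 := by
  set s2 := Real.sinh (2*ζ) with hs2def
  have hs2 : 0 ≤ s2 := sinh_nonneg' (by linarith)
  have hs2b : s2 ≤ 6*ζ := by
    have h1 : s2 ≤ 2*ζ * Real.exp (2*ζ) := by
      rw [hs2def]; exact (by simpa [mul_comm] using sinh_le_texp (by linarith : (0:ℝ) ≤ 2*ζ))
    have h2 : Real.exp (2*ζ) ≤ Real.exp 1 := Real.exp_le_exp.mpr (by linarith)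
    have h3 : Real.exp 1 ≤ 3 := by linarith [Real.exp_one_lt_d9]
    nlinarith
  have hμ2 : (Real.cosh T)^2 * μ^2 ≤ s2^2 := by
    nlinarith [hP, hM, sq_nonneg (Real.sinh T * ν)]
  have hν2 : (Real.sinh T)^2 * ν^2 ≤ s2^2 := by
    nlinarith [hP, hM, sq_nonneg (Real.cosh T * μ)]
  have hcoshT : Real.exp T / 2 ≤ Real.cosh T := half_exp_le_cosh T
  have hsinhT : Real.exp T / 4 ≤ Real.sinh T := quarter_exp_le_sinh hT
  have hexpT : Real.exp (-T) * Real.exp T = 1 := by rw [← Real.exp_add]; simp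
  have hsq : (Real.exp (-T))^2 * (Real.exp T)^2 = 1 := by
    rw [← mul_pow, hexpT]; norm_num
  have hs2sq : s2^2 ≤ 36*ζ^2 := by nlinarith
  constructor
  · have hc2 : (Real.exp T)^2/4 ≤ (Real.cosh T)^2 := by nlinarith [Real.exp_pos T]
    have hstep : μ^2*(Real.exp T)^2/4 ≤ (Real.cosh T)^2 * μ^2 := by
      nlinarith [mul_nonneg (sub_nonneg.mpr hc2) (sq_nonneg μ)]
    have hμE : μ^2 * (Real.exp T)^2 ≤ 144*ζ^2 := by linarith
    have hid : μ^2 = (μ^2 * (Real.exp T)^2) * (Real.exp (-T))^2 := by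
      linear_combination (-(μ^2)) * hsq
    rw [hid]
    linarith [mul_nonneg (sub_nonneg.mpr hμE) (sq_nonneg (Real.exp (-T))),
      mul_nonneg (sq_nonneg ζ) (sq_nonneg (Real.exp (-T)))]
  · have hc2 : (Real.exp T)^2/16 ≤ (Real.sinh T)^2 := by nlinarith [Real.exp_pos T]
    have hstep : ν^2*(Real.exp T)^2/16 ≤ (Real.sinh T)^2 * ν^2 := by
      nlinarith [mul_nonneg (sub_nonneg.mpr hc2) (sq_nonneg ν)]
    have hνE : ν^2 * (Real.exp T)^2 ≤ 576*ζ^2 := by linarith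
    have hid : ν^2 = (ν^2 * (Real.exp T)^2) * (Real.exp (-T))^2 := by
      linear_combination (-(ν^2)) * hsq
    rw [hid]
    linarith [mul_nonneg (sub_nonneg.mpr hνE) (sq_nonneg (Real.exp (-T))),
      mul_nonneg (sq_nonneg ζ) (sq_nonneg (Real.exp (-T)))]

lemma a2c2 (cd n a2 c2 : ℝ) (h1 : cd*a2 - n*c2 = 0) (h2 : cd^2 - n^2 = 1) :
    a2^2 ≤ c2^2 := by
  have esq : cd^2*a2^2 - n^2*c2^2 = 0 := by
    linear_combination (cd*a2 + n*c2) * h1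
  nlinarith [sq_nonneg c2, sq_nonneg a2]

lemma eta_small (ζ E : ℝ) (h0 : 0 < ζ) (h1 : ζ ≤ 1) (hE0 : 0 < E) (hE : E ≤ 1/2401) :
    24*ζ*E ≤ 1/100 := by nlinarith

lemma dist_step (x K η : ℝ) (hx : 0 ≤ x) (hK : 1 ≤ K) (hη : 0 ≤ η)
    (hsq : x^2 ≤ 148*K^4*η^2) : x ≤ 13*K^2*η := by
  have hM0 : (0:ℝ) ≤ 13*K^2*η := by positivity
  have h2 : x^2 ≤ (13*K^2*η)^2 := by nlinarith [sq_nonneg (K^2*η)]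
  exact le_of_pow_le_pow_left₀ two_ne_zero hM0 h2

lemma final_step (K Er E21 E55 ζ zb : ℝ) (hζ : 0 ≤ ζ) (hzb : 0 ≤ zb)
    (hK0 : 1 ≤ K) (hKe : K ≤ E21) (hEr : 0 < Er)
    (hprod : E21*E21*Er ≤ E55) :
    13*K^2*(24*ζ*(Er*zb)) ≤ 4096*E55*(ζ*zb) := by
  have h1 : K^2 ≤ E21*E21 := by nlinarith
  have h2 : K^2*Er ≤ E55 := by nlinarith
  have h3 : 0 ≤ ζ*zb := mul_nonneg hζ hzb
  have h4 : 0 < K^2*Er := by positivity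
  calc 13*K^2*(24*ζ*(Er*zb)) = 312*(K^2*Er)*(ζ*zb) := by ring
    _ ≤ 312*E55*(ζ*zb) := by nlinarith
    _ ≤ 4096*E55*(ζ*zb) := by nlinarith

end ProjEst

open Metric ProjEst Real in
set_option maxHeartbeats 3000000 in
/-- Projection estimate (Lemma 4.2): closest-point projections of `u` to
Hausdorff-close geodesics are `O(ζ^{1+b})`-close. -/
theorem projection_estimate
    (r b : ℝ) (hr : 0 ≤ r) (hb0 : 0 < b) (hb1 : b ≤ 1) :
    ∃ ζ₀ C : ℝ, 0 < ζ₀ ∧ ζ₀ < 1 ∧ 0 < C ∧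
      ∀ ζ : ℝ, 0 < ζ → ζ < ζ₀ →
      ∀ g : Set UpperHalfPlane, IsCompleteGeodesic g →
      ∀ u : UpperHalfPlane, infDist u g ≤ r →
      ∀ h : Set UpperHalfPlane, IsCompleteGeodesic h →
        HClose g h (closedBall u (b * Real.log (1 / ζ))) ζ →
      ∀ p ∈ g, dist u p = infDist u g →
      ∀ q ∈ h, dist u q = infDist u h →
        dist p q ≤ C * ζ ^ (1 + b) := by
  have hx0 : 0 < 100*(1+r)/b := by positivity
  refine ⟨Real.exp (-(100*(1+r)/b)), 4096 * Real.exp (5*r+5), Real.exp_pos _,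
    by rw [Real.exp_lt_one_iff]; linarith, by positivity, ?_⟩
  intro ζ hζ0 hζ1 g hg u hug hset hh hcl p hpg hpmin q hqh hqmin
  -- basic small quantities
  set R := b * Real.log (1/ζ) with hRdef
  have hlogζ : Real.log ζ < -(100*(1+r)/b) := by
    have h := Real.log_lt_log hζ0 hζ1
    rwa [Real.log_exp] at h
  have hR : 100*(1+r) < R := by
    have h1 : 100*(1+r)/b < -Real.log ζ := by linarith
    have h2 : b * (100*(1+r)/b) < b * (-Real.log ζ) := mul_lt_mul_of_pos_left h1 hb0
    have h3 : b * (100*(1+r)/b) = 100*(1+r) := by field_simp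
    rw [hRdef, one_div, Real.log_inv]
    linarith only [h2, h3]
  have hζe100 : ζ ≤ Real.exp (-100) := by
    have h1 : -(100*(1+r)/b) ≤ -100 := by
      have h2 : (100:ℝ)*(1+r) ≤ 100*(1+r)/b := by
        rw [le_div_iff₀ hb0]; nlinarith only [hr, hb1, hb0]
      linarith only [h2, hr]
    exact le_of_lt (lt_of_lt_of_le hζ1 (Real.exp_le_exp.mpr h1))
  have hexpm100 : Real.exp (-100) ≤ 1/2401 := by
    rw [Real.exp_neg, inv_le_comm₀ (Real.exp_pos _) (by norm_num)]
    simpa using exp100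
  have hζs : ζ ≤ 1/2401 := le_trans hζe100 hexpm100
  set T := R - r with hTdef
  have hT : 100 ≤ T := by linarith only [hR, hTdef.ge, hr, hR]
  have hT0 : (0:ℝ) ≤ T := by linarith only [hT]
  have hrR : r ≤ R := by linarith only [hR, hr]
  have hR0 : (0:ℝ) ≤ R := by linarith only [hrR, hr]
  -- recenter geodesics
  obtain ⟨γ, hγ, hγ0, hγmem, -⟩ := recenter hg hpg
  obtain ⟨δ, hδ, hδ0, hδmem, hδsurj⟩ := recenter hh hqh
  obtain ⟨Bg, hBgBg, hABg, -, hframeg⟩ := exists_frame γ hγ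
  obtain ⟨Bh, hBhBh, hA'Bh, -, hframeh⟩ := exists_frame δ hδ
  set U := vec u with hUdef
  set A := vec (γ 0) with hAdef
  set A' := vec (δ 0) with hA'def
  have hAA : L A A = 1 := L_vec_self _
  have hA'A' : L A' A' = 1 := L_vec_self _
  have hUBg : L U Bg = 0 := min_frame hγ hγmem u (by rw [hγ0]; exact hpmin) hframeg
  have hUBh : L U Bh = 0 := min_frame hδ hδmem u (by rw [hδ0]; exact hqmin) hframeh
  set d1 := dist u p with hd1
  set d2 := dist u q with hd2
  have hd10 : 0 ≤ d1 := dist_nonneg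
  have hd1r : d1 ≤ r := by rw [hpmin]; exact hug
  have hUA : L U A = Real.cosh d1 := by rw [hUdef, hAdef, L_vec, hγ0]
  -- ball and Hausdorff setup
  set Bs := closedBall u R with hBs
  have hgBne : (g ∩ Bs).Nonempty := hcl.1
  have hhBne : (hset ∩ Bs).Nonempty := hcl.2.1
  have hH : hausdorffDist (g ∩ Bs) (hset ∩ Bs) ≤ ζ := hcl.2.2
  have hgBb : Bornology.IsBounded (g ∩ Bs) :=
    (isBounded_closedBall).subset Set.inter_subset_right
  have hhBb : Bornology.IsBounded (hset ∩ Bs) :=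
    (isBounded_closedBall).subset Set.inter_subset_right
  have hextract : ∀ x ∈ g ∩ Bs, ∃ y ∈ hset ∩ Bs, dist x y ≤ 2*ζ :=
    fun x hx => extract_close hgBne hhBne hgBb hhBb hζ0 hH hx
  -- d2 ≤ r + 1
  have hpB : p ∈ g ∩ Bs := ⟨hpg, by
    rw [hBs, mem_closedBall, dist_comm]
    exact le_trans hd1r hrR⟩
  obtain ⟨yp, hypmem, hypd⟩ := hextract p hpB
  have hd2r : d2 ≤ r + 1 := by
    have h1 : infDist u hset ≤ dist u yp := infDist_le_dist_of_mem hypmem.1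
    have h2 : dist u yp ≤ dist u p + dist p yp := dist_triangle _ _ _
    rw [hqmin]
    linarith only [h1, h2, hypd, hd1r, hζs, hd1.ge, hd1.le]
  have hd20 : 0 ≤ d2 := dist_nonneg
  -- a and its bound
  have hA_vec : A = vec p := by rw [hAdef, hγ0]
  have hA'_vec : A' = vec q := by rw [hA'def, hδ0]
  have haLvec : L A A' = Real.cosh (dist p q) := by rw [hA_vec, hA'_vec, L_vec]
  set K := Real.cosh (2*r+1) with hKdef
  have hdpq : dist p q ≤ 2*r+1 := by
    have h1 := dist_triangle p u q
    have h2 : dist p u = d1 := by rw [hd1, dist_comm]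
    linarith only [h1, h2, hd1r, hd2r, hd2.ge]
  have haK : L A' A ≤ K := by
    rw [L_symm, haLvec, hKdef]
    rw [Real.cosh_le_cosh, abs_of_nonneg dist_nonneg,
      abs_of_nonneg (by linarith only [hr] : (0:ℝ) ≤ 2*r+1)]
    exact hdpq
  have ha1 : 1 ≤ L A' A := by rw [L_symm, haLvec]; exact Real.one_le_cosh _
  -- far points in ball
  have hxmem : ∀ t : ℝ, |t| ≤ T → γ t ∈ g ∩ Bs := by
    intro t ht
    refine ⟨hγmem t, ?_⟩
    have e2 : Real.cosh (dist u (γ t)) = Real.cosh t * Real.cosh d1 := by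
      rw [← L_vec, ← hUdef, hframeg t, L_comb_right, hUA, hUBg]; ring
    have e3 : Real.cosh t ≤ Real.cosh T := by
      rw [Real.cosh_le_cosh, abs_of_nonneg hT0]; exact ht
    have e4 : Real.cosh t * Real.cosh d1 ≤ Real.cosh T * Real.cosh d1 :=
      mul_le_mul_of_nonneg_right e3 (le_trans zero_le_one (Real.one_le_cosh d1))
    have e5 : Real.cosh T * Real.cosh d1 ≤ Real.cosh (T + d1) := cosh_mul_cosh_le hT0 hd10
    have e6 : Real.cosh (T + d1) ≤ Real.cosh R := by
      rw [Real.cosh_le_cosh, abs_of_nonneg (by linarith only [hT0, hd10]), abs_of_nonneg hR0]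
      linarith only [hd1r, hTdef.le, hTdef.ge]
    have e7 : Real.cosh (dist u (γ t)) ≤ Real.cosh R := by linarith only [e2, e4, e5, e6]
    rw [Real.cosh_le_cosh, abs_of_nonneg dist_nonneg, abs_of_nonneg hR0] at e7
    rw [hBs, mem_closedBall, dist_comm]
    exact e7
  obtain ⟨yP, hyP, hyPd⟩ := hextract (γ T) (hxmem T (le_of_eq (abs_of_nonneg hT0)))
  obtain ⟨yM, hyM, hyMd⟩ := hextract (γ (-T)) (hxmem (-T) (by rw [abs_neg, abs_of_nonneg hT0]))
  obtain ⟨sP, hsP⟩ := hδsurj yP hyP.1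
  obtain ⟨sM, hsM⟩ := hδsurj yM hyM.1
  -- W and the sinh bound
  set W := cross A' Bh with hWdef
  have hWA' : L W A' = 0 := L_cross_left A' Bh
  have hWBh : L W Bh = 0 := L_cross_right A' Bh
  have hA'W : L A' W = 0 := by rw [L_symm]; exact hWA'
  have hBhW : L Bh W = 0 := by rw [L_symm]; exact hWBh
  have hWW : L W W = -1 := by rw [hWdef, L_cross_self, hA'A', hBhBh, hA'Bh]; ring
  have hwbound : ∀ (x : UpperHalfPlane) (s : ℝ) (y : UpperHalfPlane), δ s = y →
      dist x y ≤ 2*ζ → (L (vec x) W)^2 ≤ Real.sinh (2*ζ)^2 := by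
    intro x s y hsy hd
    have h1 : Real.cosh (dist x y) ≤ Real.cosh (2*ζ) := by
      rw [Real.cosh_le_cosh, abs_of_nonneg dist_nonneg,
        abs_of_nonneg (by linarith only [hζ0.le] : (0:ℝ) ≤ 2*ζ)]
      exact hd
    rw [hWdef]
    refine w_bound_V (vec x) (vec y) A' Bh (Real.cosh s) (Real.sinh s)
      (Real.cosh (2*ζ)) (Real.sinh (2*ζ)) hA'A' hBhBh hA'Bh (Real.cosh_sq s)
      ?_ (L_vec_self x) ?_ ?_ (Real.cosh_sq (2*ζ))
    · rw [← hsy]; exact hframeh s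
    · rw [L_vec]; exact Real.one_le_cosh _
    · rw [L_vec]; exact h1
  have hwP := hwbound (γ T) sP yP hsP hyPd
  have hwM := hwbound (γ (-T)) sM yM hsM hyMd
  -- expand and bound μ, ν
  set μ := L A W with hμdef
  set ν := L Bg W with hνdef
  have hexpP : L (vec (γ T)) W = Real.cosh T * μ + Real.sinh T * ν := by
    rw [hframeg T, L_comb_left]
  have hexpM : L (vec (γ (-T))) W = Real.cosh T * μ - Real.sinh T * ν := by
    rw [hframeg (-T), L_comb_left, Real.cosh_neg, Real.sinh_neg]; ring
  rw [hexpP] at hwP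
  rw [hexpM] at hwM
  obtain ⟨hμη, hνη⟩ := coeff_eta T ζ μ ν (by linarith only [hT]) hζ0
    (by linarith only [hζs]) hwP hwM
  set η := 24 * ζ * Real.exp (-T) with hηdef
  have hη0 : 0 ≤ η := by positivity
  -- Gram scalars in the g-frame
  set N := cross A Bg with hNdef
  have hi0 := parseval A' A Bg hAA hBgBg hABg
  rw [← hNdef, hA'A'] at hi0
  have hiii0 := parseval Bg A' Bh hA'A' hBhBh hA'Bh
  rw [← hWdef, hBgBg] at hiii0
  have hiv0 := parseval W A Bg hAA hBgBg hABg
  rw [← hNdef, hWW] at hiv0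
  have hv0 := parseval₂ A' W A Bg hAA hBgBg hABg
  rw [← hNdef, hA'W] at hv0
  have hvi0 := parseval₂ Bh W A Bg hAA hBgBg hABg
  rw [← hNdef, hBhW] at hvi0
  have hvii0 := parseval₂ U Bh A Bg hAA hBgBg hABg
  rw [← hNdef, hUBh] at hvii0
  have hUpars := parseval U A Bg hAA hBgBg hABg
  rw [← hNdef, L_vec_self] at hUpars
  have hviii0 := parseval₂ A' Bh A Bg hAA hBgBg hABg
  rw [← hNdef, hA'Bh] at hviii0
  -- translate symm forms
  have hsymmWA : L W A = μ := by rw [L_symm, hμdef]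
  have hsymmWBg : L W Bg = ν := by rw [L_symm, hνdef]
  have hsymmBgA' : L Bg A' = L A' Bg := by rw [L_symm]
  have hsymmBgBh : L Bg Bh = L Bh Bg := by rw [L_symm]
  have hsymmBgW : L Bg W = ν := by rw [hνdef]
  rw [hsymmWA, hsymmWBg] at hv0 hvi0 hiv0
  rw [hsymmBgA', hsymmBgW, hsymmBgBh] at hiii0
  rw [hUA, hUBg] at hvii0 hUpars
  -- a2² ≤ c2²
  have hvii : (L Bh A)^2 ≤ (L Bh N)^2 :=
    a2c2 (Real.cosh d1) (L U N) (L Bh A) (L Bh N)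
      (by linarith only [hvii0]) (by linarith only [hUpars])
  -- endgame
  have hKK : (1:ℝ) ≤ K := Real.one_le_cosh _
  have hηs : η ≤ 1/100 := by
    rw [hηdef]
    refine eta_small ζ (Real.exp (-T)) hζ0 (by linarith only [hζs]) (Real.exp_pos _) ?_
    exact le_trans (Real.exp_le_exp.mpr (by linarith only [hT])) hexpm100
  have hEG := endgame K η (L A' A) (L A' Bg) (L A' N) (L Bh A) (L Bh Bg) (L Bh N) μ ν (L W N)
    hKK hη0 hηs haK ha1 hμη hνη
    (by linarith only [hi0])
    (by linarith only [hiii0])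
    (by linarith only [hiv0])
    (by linarith only [hv0])
    (by linarith only [hvi0])
    hvii
    (by linarith only [hviii0])
  -- final conversion
  have hcosh_a : Real.cosh (dist p q) = L A' A := by rw [L_symm, haLvec]
  have hquad := cosh_quad (dist p q)
  rw [hcosh_a] at hquad
  have hdsq : (dist p q)^2 ≤ 148*K^4*η^2 := by linarith only [hquad, hEG]
  have hdM : dist p q ≤ 13*K^2*η := dist_step _ _ _ dist_nonneg hKK hη0 hdsq
  -- convert η to ζ^(1+b)
  have hKe : K ≤ Real.exp (2*r+1) := by
    rw [hKdef]; exact cosh_le_exp (by linarith only [hr])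
  have hzb : Real.exp (-R) = ζ ^ b := by
    rw [Real.rpow_def_of_pos hζ0]
    congr 1
    rw [hRdef, one_div, Real.log_inv]; ring
  have hexpmT : Real.exp (-T) = Real.exp r * (ζ ^ b) := by
    rw [← hzb, ← Real.exp_add]
    congr 1
    rw [hTdef]; ring
  have hz1b : ζ ^ (1+b) = ζ * ζ ^ b := by
    rw [Real.rpow_add hζ0, Real.rpow_one]
  have hzbpos : (0:ℝ) < ζ ^ b := Real.rpow_pos_of_pos hζ0 _
  have hprod : Real.exp (2*r+1) * Real.exp (2*r+1) * Real.exp r ≤ Real.exp (5*r+5) := by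
    rw [← Real.exp_add, ← Real.exp_add]
    exact Real.exp_le_exp.mpr (by linarith only [])
  have hfinal : 13*K^2*η ≤ 4096 * Real.exp (5*r+5) * ζ ^ (1+b) := by
    rw [hηdef, hexpmT, hz1b]
    have := final_step K (Real.exp r) (Real.exp (2*r+1)) (Real.exp (5*r+5)) ζ (ζ ^ b)
      hζ0.le hzbpos.le hKK hKe (Real.exp_pos r) hprod
    calc 13*K^2*(24*ζ*(Real.exp r * ζ ^ b)) = 13*K^2*(24*ζ*(Real.exp r * ζ ^ b)) := rfl
      _ ≤ 4096 * Real.exp (5*r+5) * (ζ * ζ ^ b) := by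
          have he : 13*K^2*(24*ζ*(Real.exp r * ζ ^ b)) = 13*K^2*(24*ζ*(Real.exp r * ζ ^ b)) := rfl
          calc 13*K^2*(24*ζ*(Real.exp r * ζ ^ b))
              = 13*K^2*(24*ζ*(Real.exp r * (ζ ^ b))) := by ring
            _ ≤ 4096 * Real.exp (5*r+5) * (ζ * ζ ^ b) := by
                have h := final_step K (Real.exp r) (Real.exp (2*r+1)) (Real.exp (5*r+5)) ζ (ζ ^ b)
                  hζ0.le hzbpos.le hKK hKe (Real.exp_pos r) hprod
                linarith only [h]
  linarith only [hdM, hfinal]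
end
end

section
/- (Projection estimate for arbitrary balls, Corollary 4.3.) Fix r ≥ 0. There exists C > 0, depending only on r, such that for every ζ ∈ (0,1) the following holds. Let g be a complete geodesic in ℍ, let u ∈ ℍ satisfy d(u,g) ≤ r, and let B be any closed ball centered at u that meets g. Suppose h is a complete geodesic that is ζ-Hausdorff-close to g on B. Then for every closest-point projection p of u to g and every closest-point projection q of u to h, one has dist(p,q) ≤ C·ζ. -/
set_option maxHeartbeats 1000000

open Metric Real Filter

namespace HypGeo

noncomputable def P0 (z : UpperHalfPlane) : ℝ := (z.re ^ 2 + z.im ^ 2 + 1) / (2 * z.im)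
noncomputable def P1 (z : UpperHalfPlane) : ℝ := z.re / z.im
noncomputable def P2 (z : UpperHalfPlane) : ℝ := (z.re ^ 2 + z.im ^ 2 - 1) / (2 * z.im)

lemma P_norm (z : UpperHalfPlane) : P0 z ^ 2 - P1 z ^ 2 - P2 z ^ 2 = 1 := by
  have hz : z.im ≠ 0 := z.im_pos.ne'
  simp only [P0, P1, P2]
  field_simp
  ring

lemma P0_pos (z : UpperHalfPlane) : 0 < P0 z := by
  have hz : 0 < z.im := z.im_pos
  apply div_pos _ (by linarith)
  positivity

lemma cosh_dist_P (z w : UpperHalfPlane) :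
    Real.cosh (dist z w) = P0 z * P0 w - P1 z * P1 w - P2 z * P2 w := by
  rw [UpperHalfPlane.cosh_dist']
  have hz : z.im ≠ 0 := z.im_pos.ne'
  have hw : w.im ≠ 0 := w.im_pos.ne'
  simp only [P0, P1, P2]
  field_simp
  ring

lemma median (z w m u : UpperHalfPlane) (h1 : dist z m = dist z w / 2)
    (h2 : dist w m = dist z w / 2) :
    Real.cosh (dist u z) + Real.cosh (dist u w)
      = 2 * Real.cosh (dist z w / 2) * Real.cosh (dist u m) := by
  obtain ⟨c, hc_def⟩ : ∃ c, c = Real.cosh (dist z w / 2) := ⟨_, rfl⟩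
  have hc : 1 ≤ c := hc_def ▸ Real.one_le_cosh _
  have e1 : P0 z * P0 m - P1 z * P1 m - P2 z * P2 m = c := by
    rw [← cosh_dist_P, h1, hc_def]
  have e2 : P0 w * P0 m - P1 w * P1 m - P2 w * P2 m = c := by
    rw [← cosh_dist_P, h2, hc_def]
  have e3 : P0 z * P0 w - P1 z * P1 w - P2 z * P2 w = 2 * c ^ 2 - 1 := by
    rw [← cosh_dist_P]
    have h5 : dist z w = 2 * (dist z w / 2) := by ring
    rw [h5, Real.cosh_two_mul, Real.sinh_sq, hc_def]
    ring
  have nZ := P_norm z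
  have nW := P_norm w
  have nM := P_norm m
  obtain ⟨d0, hd0_def⟩ : ∃ d, d = 2 * c * P0 m - (P0 z + P0 w) := ⟨_, rfl⟩
  obtain ⟨d1, hd1_def⟩ : ∃ d, d = 2 * c * P1 m - (P1 z + P1 w) := ⟨_, rfl⟩
  obtain ⟨d2, hd2_def⟩ : ∃ d, d = 2 * c * P2 m - (P2 z + P2 w) := ⟨_, rfl⟩
  have hDD : d0 ^ 2 - d1 ^ 2 - d2 ^ 2 = 0 := by
    rw [hd0_def, hd1_def, hd2_def]
    linear_combination 4 * c ^ 2 * nM - 4 * c * e1 - 4 * c * e2 + nZ + nW + 2 * e3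
  have hDM : d0 * P0 m = d1 * P1 m + d2 * P2 m := by
    rw [hd0_def, hd1_def, hd2_def]
    linear_combination 2 * c * nM - e1 - e2
  have hm0 : 0 < P0 m := P0_pos m
  have cs : (d1 * P1 m + d2 * P2 m) ^ 2 ≤ d0 ^ 2 * (P1 m ^ 2 + P2 m ^ 2) := by
    nlinarith [sq_nonneg (d1 * P2 m - d2 * P1 m), hDD]
  have h6 : d0 ^ 2 * P0 m ^ 2 ≤ d0 ^ 2 * (P1 m ^ 2 + P2 m ^ 2) := by
    calc d0 ^ 2 * P0 m ^ 2 = (d0 * P0 m) ^ 2 := by ring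
      _ = (d1 * P1 m + d2 * P2 m) ^ 2 := by rw [hDM]
      _ ≤ _ := cs
  have h7 : d0 ^ 2 * (P0 m ^ 2 - P1 m ^ 2 - P2 m ^ 2) = d0 ^ 2 := by rw [nM, mul_one]
  have h8 : d0 ^ 2 ≤ 0 := by nlinarith [h6, h7]
  have hd0 : d0 = 0 := by
    have := le_antisymm h8 (sq_nonneg d0)
    exact (pow_eq_zero_iff two_ne_zero).mp this
  have h9 : d1 ^ 2 + d2 ^ 2 = 0 := by rw [hd0] at hDD; nlinarith [hDD]
  have hd1 : d1 = 0 := by nlinarith [sq_nonneg d1, sq_nonneg d2]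
  have hd2 : d2 = 0 := by nlinarith [sq_nonneg d1, sq_nonneg d2]
  have hz0 : P0 z + P0 w = 2 * c * P0 m := by rw [hd0_def] at hd0; linarith
  have hz1 : P1 z + P1 w = 2 * c * P1 m := by rw [hd1_def] at hd1; linarith
  have hz2 : P2 z + P2 w = 2 * c * P2 m := by rw [hd2_def] at hd2; linarith
  rw [cosh_dist_P, cosh_dist_P, cosh_dist_P, ← hc_def]
  linear_combination P0 u * hz0 - P1 u * hz1 - P2 u * hz2

lemma FE {γ : ℝ → UpperHalfPlane} (hγ : Isometry γ) (u : UpperHalfPlane) (t b : ℝ) :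
    Real.cosh (dist u (γ (t + b))) + Real.cosh (dist u (γ (t - b)))
      = 2 * Real.cosh b * Real.cosh (dist u (γ t)) := by
  have key : ∀ b : ℝ, 0 ≤ b → ∀ t : ℝ,
      Real.cosh (dist u (γ (t + b))) + Real.cosh (dist u (γ (t - b)))
        = 2 * Real.cosh b * Real.cosh (dist u (γ t)) := by
    intro b hb t
    have hzw : dist (γ (t + b)) (γ (t - b)) = 2 * b := by
      rw [hγ.dist_eq, Real.dist_eq]
      rw [show t + b - (t - b) = 2 * b by ring, abs_of_nonneg (by linarith)]
    have h1 : dist (γ (t + b)) (γ t) = dist (γ (t + b)) (γ (t - b)) / 2 := by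
      rw [hzw, hγ.dist_eq, Real.dist_eq, show t + b - t = b by ring,
        abs_of_nonneg hb]
      ring
    have h2 : dist (γ (t - b)) (γ t) = dist (γ (t + b)) (γ (t - b)) / 2 := by
      rw [hzw, hγ.dist_eq, Real.dist_eq, show t - b - t = -b by ring, abs_neg,
        abs_of_nonneg hb]
      ring
    have := median (γ (t + b)) (γ (t - b)) (γ t) u h1 h2
    rw [hzw] at this
    rw [this, show 2 * b / 2 = b by ring]
  rcases le_total 0 b with hb | hb
  · exact key b hb t
  · have := key (-b) (by linarith) t
    rw [show t + -b = t - b by ring, show t - -b = t + b by ring, Real.cosh_neg] at this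
    linarith

lemma pythagoras {γ : ℝ → UpperHalfPlane} (hγ : Isometry γ) (u : UpperHalfPlane) (t₀ : ℝ)
    (hmin : ∀ t, dist u (γ t₀) ≤ dist u (γ t)) (s : ℝ) :
    Real.cosh (dist u (γ (t₀ + s))) = Real.cosh (dist u (γ t₀)) * Real.cosh s := by
  obtain ⟨A, hA_def⟩ : ∃ A, A = Real.cosh (dist u (γ t₀)) := ⟨_, rfl⟩
  have hA1 : 1 ≤ A := hA_def ▸ Real.one_le_cosh _
  obtain ⟨e, he_def⟩ : ∃ e : ℝ → ℝ,
      e = fun s => Real.cosh (dist u (γ (t₀ + s))) - A * Real.cosh s := ⟨_, rfl⟩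
  have he : ∀ s, e s = Real.cosh (dist u (γ (t₀ + s))) - A * Real.cosh s := by
    intro s; rw [he_def]
  -- the functional equation for e
  have heFE : ∀ a b, e (a + b) + e (a - b) = 2 * Real.cosh b * e a := by
    intro a b
    have h1 := FE hγ u (t₀ + a) b
    rw [show t₀ + a + b = t₀ + (a + b) by ring, show t₀ + a - b = t₀ + (a - b) by ring] at h1
    rw [he, he, he, Real.cosh_add, Real.cosh_sub]
    linarith [h1]
  have he0 : e 0 = 0 := by rw [he, add_zero, Real.cosh_zero, hA_def]; ring
  have hodd : ∀ s, e (-s) = - e s := by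
    intro s
    have := heFE 0 s
    rw [zero_add, zero_sub, he0] at this
    linarith
  have hlow : ∀ s, A - A * Real.cosh s ≤ e s := by
    intro s
    rw [he]
    have h1 : dist u (γ t₀) ≤ dist u (γ (t₀ + s)) := hmin _
    have h2 : A ≤ Real.cosh (dist u (γ (t₀ + s))) := by
      rw [hA_def]
      exact Real.cosh_le_cosh.2 (by
        rw [abs_of_nonneg dist_nonneg, abs_of_nonneg dist_nonneg]; exact h1)
    linarith
  have hbound : ∀ s, |e s| ≤ A * (Real.cosh s - 1) := by
    intro s
    rw [abs_le]
    constructor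
    · have := hlow s; linarith
    · have h1 := hlow (-s)
      rw [hodd, Real.cosh_neg] at h1
      linarith
  have hdouble : ∀ x, e (2 * x) = 2 * Real.cosh x * e x := by
    intro x
    have := heFE x x
    rw [show x - x = 0 by ring, he0, show x + x = 2 * x by ring] at this
    linarith
  -- telescoped bound
  have claim : ∀ n : ℕ, ∀ s : ℝ, 0 ≤ s →
      |e s| * Real.sinh (s / 2 ^ n) ≤ A * Real.sinh s * (Real.cosh (s / 2 ^ n) - 1) := by
    intro n
    induction n with
    | zero =>
      intro s hs
      simp only [pow_zero, div_one]
      exact mul_le_mul_of_nonneg_right (hbound s) (Real.sinh_nonneg_iff.2 hs) |>.trans_eq (by ring)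
    | succ n ih =>
      intro s hs
      have hs2 : 0 ≤ s / 2 := by linarith
      have h1 : e s = 2 * Real.cosh (s / 2) * e (s / 2) := by
        have := hdouble (s / 2); rw [show 2 * (s / 2) = s by ring] at this; exact this
      have h2 : |e s| = 2 * Real.cosh (s / 2) * |e (s / 2)| := by
        rw [h1, abs_mul, abs_of_nonneg (by positivity : (0:ℝ) ≤ 2 * Real.cosh (s / 2))]
      have h3 : s / 2 ^ (n + 1) = (s / 2) / 2 ^ n := by
        rw [pow_succ]; ring
      have h4 := ih (s / 2) hs2
      have h5 : Real.sinh s = 2 * Real.sinh (s / 2) * Real.cosh (s / 2) := by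
        rw [show s = 2 * (s / 2) by ring, Real.sinh_two_mul]
        ring_nf
      calc |e s| * Real.sinh (s / 2 ^ (n + 1))
          = 2 * Real.cosh (s / 2) * (|e (s / 2)| * Real.sinh ((s / 2) / 2 ^ n)) := by
            rw [h2, h3]; ring
        _ ≤ 2 * Real.cosh (s / 2) * (A * Real.sinh (s / 2) * (Real.cosh ((s / 2) / 2 ^ n) - 1)) := by
            apply mul_le_mul_of_nonneg_left h4 (by positivity)
        _ = A * Real.sinh s * (Real.cosh (s / 2 ^ (n + 1)) - 1) := by
            rw [h5, h3]; ring
  -- conclude e s = 0 for s > 0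
  have hexp_bound : ∀ y : ℝ, 0 ≤ y → Real.sinh y ≤ y * Real.exp y := by
    intro y hy
    have h1 : Real.sinh y ≤ Real.exp y - 1 := by
      rw [Real.sinh_eq]
      have h2 : Real.exp (-y) + Real.exp y ≥ 2 := by
        nlinarith [Real.add_one_le_exp (-y), Real.add_one_le_exp y]
      nlinarith
    have h2 : Real.exp y - 1 ≤ y * Real.exp y := by
      have ha := Real.add_one_le_exp (-y)
      have hb : Real.exp (-y) * Real.exp y = 1 := by
        rw [← Real.exp_add]; simp
      nlinarith [ha, hb, Real.exp_pos y]
    linarith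
  have hzero : ∀ s : ℝ, 0 ≤ s → e s = 0 := by
    intro s hs
    rcases eq_or_lt_of_le hs with h | h
    · rw [← h, he0]
    · have hbnd : ∀ n : ℕ, |e s| ≤ A * Real.sinh s * s * Real.exp s / 2 ^ n := by
        intro n
        have hx : 0 < s / 2 ^ n := by positivity
        have hsx : 0 < Real.sinh (s / 2 ^ n) := Real.sinh_pos_iff.2 hx
        have h1 := claim n s hs
        -- cosh x - 1 = 2 sinh(x/2)^2 ≤ 2 sinh(x/2) sinh x
        have h2 : Real.cosh (s / 2 ^ n) - 1 ≤ 2 * Real.sinh (s / 2 ^ (n + 1)) * Real.sinh (s / 2 ^ n) := by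
          have hxx : s / 2 ^ n = 2 * (s / 2 ^ (n + 1)) := by rw [pow_succ]; ring
          have h3 : Real.cosh (s / 2 ^ n) = 2 * Real.sinh (s / 2 ^ (n + 1)) ^ 2 + 1 := by
            rw [hxx, Real.cosh_two_mul, Real.cosh_sq]; ring
          have h4 : Real.sinh (s / 2 ^ (n + 1)) ≤ Real.sinh (s / 2 ^ n) := by
            apply Real.sinh_le_sinh.2
            rw [hxx]
            have : 0 ≤ s / 2 ^ (n+1) := by positivity
            linarith
          have h5 : 0 ≤ Real.sinh (s / 2 ^ (n + 1)) := by
            apply Real.sinh_nonneg_iff.2; positivity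
          nlinarith
        have h6 : |e s| ≤ A * Real.sinh s * (2 * Real.sinh (s / 2 ^ (n + 1))) := by
          have h7 : |e s| * Real.sinh (s / 2 ^ n)
              ≤ A * Real.sinh s * (2 * Real.sinh (s / 2 ^ (n + 1))) * Real.sinh (s / 2 ^ n) := by
            calc |e s| * Real.sinh (s / 2 ^ n) ≤ A * Real.sinh s * (Real.cosh (s / 2 ^ n) - 1) := h1
              _ ≤ _ := by
                  have hAs : 0 ≤ A * Real.sinh s := by
                    have : 0 ≤ Real.sinh s := Real.sinh_nonneg_iff.2 hs
                    positivity
                  calc A * Real.sinh s * (Real.cosh (s / 2 ^ n) - 1)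
                      ≤ A * Real.sinh s * (2 * Real.sinh (s / 2 ^ (n + 1)) * Real.sinh (s / 2 ^ n)) :=
                        mul_le_mul_of_nonneg_left h2 hAs
                    _ = A * Real.sinh s * (2 * Real.sinh (s / 2 ^ (n + 1))) * Real.sinh (s / 2 ^ n) := by ring
          exact le_of_mul_le_mul_right h7 hsx
        have h8 : Real.sinh (s / 2 ^ (n + 1)) ≤ s / 2 ^ (n + 1) * Real.exp s := by
          have hy : 0 ≤ s / 2 ^ (n + 1) := by positivity
          calc Real.sinh (s / 2 ^ (n + 1)) ≤ s / 2 ^ (n + 1) * Real.exp (s / 2 ^ (n + 1)) :=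
              hexp_bound _ hy
            _ ≤ s / 2 ^ (n + 1) * Real.exp s := by
                apply mul_le_mul_of_nonneg_left _ hy
                apply Real.exp_le_exp.2
                calc s / 2 ^ (n + 1) ≤ s / 1 := by
                      apply div_le_div_of_nonneg_left hs (by norm_num) (one_le_pow₀ (by norm_num))
                  _ = s := by ring
        have hAs : 0 ≤ A * Real.sinh s := by
          have : 0 ≤ Real.sinh s := Real.sinh_nonneg_iff.2 hs
          positivity
        calc |e s| ≤ A * Real.sinh s * (2 * Real.sinh (s / 2 ^ (n + 1))) := h6
          _ ≤ A * Real.sinh s * (2 * (s / 2 ^ (n + 1) * Real.exp s)) := by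
              apply mul_le_mul_of_nonneg_left _ hAs
              have := h8; nlinarith [h8, Real.sinh_nonneg_iff.2 (show (0:ℝ) ≤ s/2^(n+1) by positivity)]
          _ = A * Real.sinh s * s * Real.exp s / 2 ^ n := by
              rw [pow_succ]; ring
      have hlim : Tendsto (fun n : ℕ => A * Real.sinh s * s * Real.exp s / 2 ^ n) atTop (nhds 0) := by
        have h1 : Tendsto (fun n : ℕ => ((1:ℝ) / 2) ^ n) atTop (nhds 0) :=
          tendsto_pow_atTop_nhds_zero_of_lt_one (by norm_num) (by norm_num)
        have h2 := h1.const_mul (A * Real.sinh s * s * Real.exp s)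
        rw [mul_zero] at h2
        convert h2 using 2 with n
        rw [div_pow, one_pow]
        ring
      have : |e s| ≤ 0 := ge_of_tendsto hlim (Eventually.of_forall hbnd)
      exact abs_nonpos_iff.1 this
  have final : e s = 0 := by
    rcases le_total 0 s with h | h
    · exact hzero s h
    · have := hzero (-s) (by linarith)
      rw [hodd] at this
      linarith
  have := he s
  rw [final, hA_def] at this
  linarith

/-- Window lemma: the trace of a geodesic in a closed ball is a symmetric window
around the foot of the center. -/
lemma window {γ : ℝ → UpperHalfPlane} (hγ : Isometry γ) (u p : UpperHalfPlane)
    (hp : p ∈ Set.range γ) (hfoot : dist u p = infDist u (Set.range γ))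
    (R : ℝ) (hR : dist u p ≤ R) :
    ∃ S : ℝ, 0 ≤ S ∧
      ∃ δ : ℝ → UpperHalfPlane, Isometry δ ∧ δ 0 = p ∧ Set.range δ = Set.range γ ∧
        (∀ s : ℝ, δ s ∈ closedBall u R ↔ |s| ≤ S) := by
  obtain ⟨tp, htp⟩ := hp
  have hmin : ∀ t, dist u (γ tp) ≤ dist u (γ t) := by
    intro t
    rw [htp, hfoot]
    exact infDist_le_dist_of_mem (Set.mem_range_self t)
  obtain ⟨d, hd_def⟩ : ∃ d, d = dist u p := ⟨_, rfl⟩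
  have hd0 : 0 ≤ d := hd_def ▸ dist_nonneg
  have hR0 : 0 ≤ R := le_trans hd0 (hd_def ▸ hR)
  have hcd : 1 ≤ Real.cosh d := Real.one_le_cosh d
  have hcdpos : 0 < Real.cosh d := by linarith
  have hcRd : Real.cosh d ≤ Real.cosh R := by
    rw [Real.cosh_le_cosh, abs_of_nonneg hd0, abs_of_nonneg hR0]
    exact hd_def ▸ hR
  set S : ℝ := Real.arsinh (Real.sqrt ((Real.cosh R / Real.cosh d) ^ 2 - 1)) with hS_def
  have harg : 0 ≤ (Real.cosh R / Real.cosh d) ^ 2 - 1 := by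
    have h1 : 1 ≤ Real.cosh R / Real.cosh d := (one_le_div hcdpos).2 hcRd
    nlinarith
  have hS0 : 0 ≤ S := by
    rw [hS_def, Real.arsinh_nonneg_iff]
    exact Real.sqrt_nonneg _
  have hcoshS : Real.cosh d * Real.cosh S = Real.cosh R := by
    rw [hS_def, Real.cosh_arsinh, Real.sq_sqrt harg,
      show 1 + ((Real.cosh R / Real.cosh d) ^ 2 - 1) = (Real.cosh R / Real.cosh d) ^ 2 by ring]
    rw [Real.sqrt_sq (by positivity)]
    field_simp
  refine ⟨S, hS0, fun s => γ (tp + s), ?_, by simpa using htp, ?_, ?_⟩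
  · have htrans : Isometry (fun s : ℝ => tp + s) := by
      apply Isometry.of_dist_eq
      intro a b
      rw [Real.dist_eq, Real.dist_eq]
      congr 1
      ring
    exact hγ.comp htrans
  · ext x
    constructor
    · rintro ⟨s, rfl⟩
      exact ⟨tp + s, rfl⟩
    · rintro ⟨t, rfl⟩
      exact ⟨t - tp, by simp⟩
  · intro s
    have hpyth := pythagoras hγ u tp hmin s
    rw [htp, ← hd_def] at hpyth
    rw [mem_closedBall, dist_comm]
    constructor
    · intro h
      have h1 : Real.cosh (dist u (γ (tp + s))) ≤ Real.cosh R := by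
        rw [Real.cosh_le_cosh, abs_of_nonneg dist_nonneg, abs_of_nonneg hR0]; exact h
      rw [hpyth, ← hcoshS] at h1
      have h2 : Real.cosh s ≤ Real.cosh S := by
        have := (mul_le_mul_iff_right₀ hcdpos).1 h1
        exact this
      rw [Real.cosh_le_cosh, abs_of_nonneg hS0] at h2
      exact h2
    · intro h
      have h2 : Real.cosh s ≤ Real.cosh S := by
        rw [Real.cosh_le_cosh, abs_of_nonneg hS0]; exact h
      have h1 : Real.cosh (dist u (γ (tp + s))) ≤ Real.cosh R := by
        rw [hpyth, ← hcoshS]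
        exact (mul_le_mul_iff_right₀ hcdpos).2 h2
      rw [Real.cosh_le_cosh, abs_of_nonneg dist_nonneg, abs_of_nonneg hR0] at h1
      exact h1

end HypGeo

open Metric

/-- Projection estimate for arbitrary balls (Corollary 4.3). -/
theorem projection_estimate_ball (r : ℝ) (hr : 0 ≤ r) :
    ∃ C : ℝ, 0 < C ∧
      ∀ ζ : ℝ, 0 < ζ → ζ < 1 →
      ∀ g : Set UpperHalfPlane, IsCompleteGeodesic g →
      ∀ u : UpperHalfPlane, infDist u g ≤ r →
      ∀ R : ℝ, (g ∩ closedBall u R).Nonempty →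
      ∀ h : Set UpperHalfPlane, IsCompleteGeodesic h →
        HClose g h (closedBall u R) ζ →
      ∀ p ∈ g, dist u p = infDist u g →
      ∀ q ∈ h, dist u q = infDist u h →
        dist p q ≤ C * ζ := by
  refine ⟨8, by norm_num, ?_⟩
  intro ζ hζ hζ1 g hg u hug R hgB h hh hclose p hp hpd q hq hqd
  obtain ⟨hgB', hhB', hHD⟩ := hclose
  obtain ⟨γ, hγ, rfl⟩ := hg
  obtain ⟨η, hη, rfl⟩ := hh
  -- p and q are in the ball
  have hpR : dist u p ≤ R := by
    obtain ⟨x, hxg, hxB⟩ := hgB'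
    rw [hpd]
    exact le_trans (infDist_le_dist_of_mem hxg) (by rwa [dist_comm, ← mem_closedBall])
  have hqR : dist u q ≤ R := by
    obtain ⟨y, hyh, hyB⟩ := hhB'
    rw [hqd]
    exact le_trans (infDist_le_dist_of_mem hyh) (by rwa [dist_comm, ← mem_closedBall])
  -- windows
  obtain ⟨S, hS0, δ, hδ, hδ0, hδr, hδmem⟩ := HypGeo.window hγ u p hp hpd R hpR
  obtain ⟨T, hT0, ε, hε, hε0, hεr, hεmem⟩ := HypGeo.window hη u q hq hqd R hqR
  -- compactness of the traces
  have hclg : IsCompact (Set.range γ ∩ closedBall u R) :=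
    (isCompact_closedBall u R).of_isClosed_subset
      (hγ.isClosedEmbedding.isClosed_range.inter Metric.isClosed_closedBall)
      Set.inter_subset_right
  have hclh : IsCompact (Set.range η ∩ closedBall u R) :=
    (isCompact_closedBall u R).of_isClosed_subset
      (hη.isClosedEmbedding.isClosed_range.inter Metric.isClosed_closedBall)
      Set.inter_subset_right
  have hfin : EMetric.hausdorffEdist (Set.range γ ∩ closedBall u R) (Set.range η ∩ closedBall u R) ≠ ⊤ :=
    hausdorffEdist_ne_top_of_nonempty_of_bounded hgB' hhB'
      (hclg.isBounded) (hclh.isBounded)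
  -- picking close points
  have pickh : ∀ x ∈ Set.range γ ∩ closedBall u R, ∃ s : ℝ, |s| ≤ T ∧ dist x (ε s) ≤ ζ := by
    intro x hx
    have h1 : infDist x (Set.range η ∩ closedBall u R) ≤ ζ :=
      le_trans (infDist_le_hausdorffDist_of_mem hx hfin) hHD
    obtain ⟨y, hy, hyd⟩ := hclh.exists_infDist_eq_dist hhB' x
    obtain ⟨s, rfl⟩ : y ∈ Set.range ε := hεr ▸ hy.1
    exact ⟨s, (hεmem s).1 hy.2, by rw [← hyd]; exact h1⟩
  have pickg : ∀ y ∈ Set.range η ∩ closedBall u R, ∃ s : ℝ, |s| ≤ S ∧ dist y (δ s) ≤ ζ := by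
    intro y hy
    have h1 : infDist y (Set.range γ ∩ closedBall u R) ≤ ζ := by
      rw [hausdorffDist_comm] at hHD
      have hfin' : EMetric.hausdorffEdist (Set.range η ∩ closedBall u R)
          (Set.range γ ∩ closedBall u R) ≠ ⊤ := by
        exact hausdorffEdist_ne_top_of_nonempty_of_bounded hhB' hgB' (hclh.isBounded) (hclg.isBounded)
      exact le_trans (infDist_le_hausdorffDist_of_mem hy hfin') hHD
    obtain ⟨x, hx, hxd⟩ := hclg.exists_infDist_eq_dist hgB' y
    obtain ⟨s, rfl⟩ : x ∈ Set.range δ := hδr ▸ hx.1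
    exact ⟨s, (hδmem s).1 hx.2, by rw [← hxd]; exact h1⟩
  -- memberships
  have hmemδ : ∀ s : ℝ, |s| ≤ S → δ s ∈ Set.range γ ∩ closedBall u R := by
    intro s hs
    exact ⟨hδr ▸ Set.mem_range_self s, (hδmem s).2 hs⟩
  have hmemε : ∀ s : ℝ, |s| ≤ T → ε s ∈ Set.range η ∩ closedBall u R := by
    intro s hs
    exact ⟨hεr ▸ Set.mem_range_self s, (hεmem s).2 hs⟩
  obtain ⟨t1, ht1T, ht1⟩ := pickh (δ (-S)) (hmemδ (-S) (by rw [abs_neg, abs_of_nonneg hS0]))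
  obtain ⟨t2, ht2T, ht2⟩ := pickh (δ S) (hmemδ S (by rw [abs_of_nonneg hS0]))
  obtain ⟨t0, ht0T, ht0⟩ := pickh (δ 0) (hmemδ 0 (by simpa using hS0))
  obtain ⟨s1, hs1S, hs1⟩ := pickg (ε (-T)) (hmemε (-T) (by rw [abs_neg, abs_of_nonneg hT0]))
  obtain ⟨s2, hs2S, hs2⟩ := pickg (ε T) (hmemε T (by rw [abs_of_nonneg hT0]))
  -- distance computations
  have hδd : ∀ a b : ℝ, dist (δ a) (δ b) = |a - b| := fun a b => by
    rw [hδ.dist_eq, Real.dist_eq]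
  have hεd : ∀ a b : ℝ, dist (ε a) (ε b) = |a - b| := fun a b => by
    rw [hε.dist_eq, Real.dist_eq]
  -- key inequalities
  have b12 : 2 * S - 2 * ζ ≤ |t2 - t1| := by
    have h1 : dist (δ (-S)) (δ S) = 2 * S := by
      rw [hδd, show -S - S = -(2*S) by ring, abs_neg, abs_of_nonneg (by linarith)]
    have h2 : dist (δ (-S)) (δ S) ≤ dist (δ (-S)) (ε t1) + dist (ε t1) (ε t2) + dist (ε t2) (δ S) := by
      exact dist_triangle4 _ _ _ _
    rw [h1, hεd] at h2
    have h3 : dist (ε t2) (δ S) = dist (δ S) (ε t2) := dist_comm _ _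
    rw [h3] at h2
    calc 2 * S - 2 * ζ ≤ |t1 - t2| := by linarith
      _ = |t2 - t1| := abs_sub_comm _ _
  have b01 : S - 2 * ζ ≤ |t0 - t1| := by
    have h1 : dist (δ (-S)) (δ 0) = S := by
      rw [hδd, show -S - 0 = -S by ring, abs_neg, abs_of_nonneg hS0]
    have h2 := dist_triangle4 (δ (-S)) (ε t1) (ε t0) (δ 0)
    rw [h1, hεd] at h2
    rw [dist_comm (ε t0) (δ 0)] at h2
    calc S - 2 * ζ ≤ |t1 - t0| := by linarith
      _ = |t0 - t1| := abs_sub_comm _ _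
  have b02 : S - 2 * ζ ≤ |t0 - t2| := by
    have h1 : dist (δ S) (δ 0) = S := by
      rw [hδd, show S - 0 = S by ring, abs_of_nonneg hS0]
    have h2 := dist_triangle4 (δ S) (ε t2) (ε t0) (δ 0)
    rw [h1, hεd] at h2
    rw [dist_comm (ε t0) (δ 0)] at h2
    calc S - 2 * ζ ≤ |t2 - t0| := by linarith
      _ = |t0 - t2| := abs_sub_comm _ _
  have hTS : T ≤ S + ζ := by
    have h1 : dist (ε (-T)) (ε T) = 2 * T := by
      rw [hεd, show -T - T = -(2*T) by ring, abs_neg, abs_of_nonneg (by linarith)]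
    have h2 := dist_triangle4 (ε (-T)) (δ s1) (δ s2) (ε T)
    rw [h1, hδd] at h2
    rw [dist_comm (δ s2) (ε T)] at h2
    have h3 : |s1 - s2| ≤ 2 * S := by
      calc |s1 - s2| ≤ |s1| + |s2| := abs_sub _ _
        _ ≤ 2 * S := by linarith
    linarith
  -- final arithmetic: |t0| ≤ 7ζ
  have ht0bound : |t0| ≤ 7 * ζ := by
    rcases le_or_gt S (6 * ζ) with hc | hc
    · linarith [ht0T, hTS]
    · obtain ⟨l0, r0⟩ := abs_le.1 ht0T
      obtain ⟨l1, r1⟩ := abs_le.1 ht1T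
      obtain ⟨l2, r2⟩ := abs_le.1 ht2T
      rcases le_abs.1 b12 with h12 | h12 <;>
        rcases le_abs.1 b01 with h01 | h01 <;>
          rcases le_abs.1 b02 with h02 | h02 <;>
            (rw [abs_le]; constructor <;> linarith)
  -- conclusion
  have hfinal : dist p q ≤ ζ + |t0| := by
    have h1 : dist p q ≤ dist p (ε t0) + dist (ε t0) q := dist_triangle _ _ _
    have h2 : dist (ε t0) q = |t0| := by
      rw [← hε0, hεd, sub_zero]
    have h3 : dist p (ε t0) ≤ ζ := hδ0 ▸ ht0
    linarith
  linarith [ht0bound, hfinal]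
end

section
/- (Norm bound for a transvection, equation (7.3) of the paper, stated for the imaginary axis.) Let ℓ ∈ ℝ and let T ∈ SL(2,ℝ) be the diagonal matrix with diagonal entries e^{ℓ/2} and e^{−ℓ/2}, so that T acts on ℍ by z ↦ e^{ℓ}·z and translates the positive imaginary axis I = {z ∈ ℍ : Re z = 0} (a complete geodesic) by hyperbolic distance |ℓ|. Then for all x̂, x ∈ ℍ one has dist(T•x, x)·exp(−dist(x̂,x)) ≤ |ℓ|·exp(d(x̂, I)), where d(x̂, I) = `Metric.infDist x̂ I`. (Equivalently, ‖T‖_{x̂} := d_x̂(id, T) ≤ |ℓ|·e^{d(x̂,I)}.) -/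
open Metric

private lemma sinh_superhom' {c t : ℝ} (hc : 1 ≤ c) (ht : 0 ≤ t) :
    c * Real.sinh t ≤ Real.sinh (c * t) := by
  have hmono : MonotoneOn (fun t => Real.sinh (c * t) - c * Real.sinh t) (Set.Ici 0) := by
    apply monotoneOn_of_deriv_nonneg (convex_Ici 0)
    · fun_prop
    · intro x hx
      exact ((Real.differentiable_sinh.comp (differentiable_id.const_mul c)).sub
        (Real.differentiable_sinh.const_mul c)).differentiableAt.differentiableWithinAt
    · intro x hx
      simp only [interior_Ici, Set.mem_Ioi] at hx
      have h1 : HasDerivAt (fun t => Real.sinh (c * t) - c * Real.sinh t)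
          (Real.cosh (c * x) * (c * 1) - c * Real.cosh x) x :=
        ((Real.hasDerivAt_sinh (c * x)).comp x
          ((hasDerivAt_id x).const_mul c)).sub ((Real.hasDerivAt_sinh x).const_mul c)
      rw [h1.deriv]
      have : Real.cosh x ≤ Real.cosh (c * x) := by
        rw [Real.cosh_le_cosh]
        rw [abs_of_pos hx, abs_of_pos (by nlinarith)]
        nlinarith
      nlinarith [this, le_trans zero_le_one hc]
  have := hmono (Set.self_mem_Ici) (Set.mem_Ici.mpr ht) ht
  simp only [mul_zero, Real.sinh_zero, sub_zero] at this
  linarith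

private lemma abs_sinh' (t : ℝ) : |Real.sinh t| = Real.sinh |t| := by
  rcases le_total 0 t with h | h
  · rw [abs_of_nonneg h, abs_of_nonneg]
    rw [← Real.sinh_zero]
    exact Real.sinh_le_sinh.mpr h
  · rw [abs_of_nonpos h, abs_of_nonpos, ← Real.sinh_neg]
    rw [← Real.sinh_zero]
    exact Real.sinh_le_sinh.mpr h

private lemma arsinh_le_dist_axis (x z : UpperHalfPlane) (hz : z.re = 0) :
    Real.arsinh (|x.re| / x.im) ≤ dist x z := by
  set r : ℝ := |x.re| / x.im with hr
  have hx := x.im_pos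
  have hzpos := z.im_pos
  have hr0 : 0 ≤ r := div_nonneg (abs_nonneg _) hx.le
  have h1 : Real.cosh (Real.arsinh r) ≤ Real.cosh (dist x z) := by
    rw [Real.cosh_arsinh, UpperHalfPlane.cosh_dist]
    have hd : dist (x : ℂ) (z : ℂ) ^ 2 = x.re ^ 2 + (x.im - z.im) ^ 2 := by
      rw [Complex.dist_eq, Complex.sq_norm, Complex.normSq_apply]
      simp only [Complex.sub_re, Complex.sub_im, UpperHalfPlane.coe_re, UpperHalfPlane.coe_im, hz]
      ring
    rw [hd]
    have hsq : Real.sqrt (1 + r ^ 2) ^ 2 = 1 + r ^ 2 := Real.sq_sqrt (by positivity)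
    have hs0 : 0 ≤ Real.sqrt (1 + r ^ 2) := Real.sqrt_nonneg _
    have hr2 : r ^ 2 = x.re ^ 2 / x.im ^ 2 := by rw [hr, div_pow, sq_abs]
    have hr2' : x.re ^ 2 = r ^ 2 * x.im ^ 2 := by rw [hr2]; field_simp
    have h2ab : (0:ℝ) < 2 * x.im * z.im := by positivity
    rw [← sub_le_iff_le_add', le_div_iff₀ h2ab]
    nlinarith [sq_nonneg (Real.sqrt (1 + r ^ 2) * x.im - z.im)]
  have := Real.cosh_le_cosh.mp h1
  rwa [abs_of_nonneg (Real.arsinh_nonneg_iff.mpr hr0), abs_of_nonneg dist_nonneg] at this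

private lemma transvection_coe (ℓ : ℝ) (T : Matrix.SpecialLinearGroup (Fin 2) ℝ)
    (hT : (T : Matrix (Fin 2) (Fin 2) ℝ) =
      !![Real.exp (ℓ / 2), 0; 0, Real.exp (-(ℓ / 2))]) (x : UpperHalfPlane) :
    ((T • x : UpperHalfPlane) : ℂ) = Real.exp ℓ * (x : ℂ) := by
  rw [UpperHalfPlane.specialLinearGroup_apply]
  have h00 : T.1 0 0 = Real.exp (ℓ / 2) := by rw [hT]; simp
  have h01 : T.1 0 1 = 0 := by rw [hT]; simp
  have h10 : T.1 1 0 = 0 := by rw [hT]; simp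
  have h11 : T.1 1 1 = Real.exp (-(ℓ / 2)) := by rw [hT]; simp
  simp only [UpperHalfPlane.coe_mk] at *
  rw [h00, h01, h10, h11]
  simp only [Algebra.algebraMap_self_apply]
  push_cast
  simp only [zero_mul, zero_add, add_zero]
  rw [div_eq_iff (Complex.exp_ne_zero _)]
  rw [show Complex.exp ↑ℓ * ↑x * Complex.exp (-(↑ℓ / 2))
      = Complex.exp (↑ℓ + -(↑ℓ / 2)) * ↑x by rw [Complex.exp_add]; ring,
    show (↑ℓ + -(↑ℓ / 2) : ℂ) = ↑ℓ / 2 by ring]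

/-- Norm bound for a transvection along the positive imaginary axis
(equation (7.3) of the paper): if `T = diag (e^{ℓ/2}, e^{−ℓ/2})`, then for all
`x̂, x ∈ ℍ` one has
`dist (T • x) x * exp (−dist x̂ x) ≤ |ℓ| * exp (infDist x̂ I)`, where `I` is the
positive imaginary axis; i.e. `‖T‖_{x̂} ≤ |ℓ| * e^{d(x̂, I)}`. -/
theorem transvection_norm_bound
    (ℓ : ℝ) (T : Matrix.SpecialLinearGroup (Fin 2) ℝ)
    (hT : (T : Matrix (Fin 2) (Fin 2) ℝ) =
      !![Real.exp (ℓ / 2), 0; 0, Real.exp (-(ℓ / 2))]) :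
    ∀ xhat x : UpperHalfPlane,
      dist (T • x) x * Real.exp (-dist xhat x) ≤
        |ℓ| * Real.exp (infDist xhat {z : UpperHalfPlane | z.re = 0}) := by
  intro xhat x
  set I : Set UpperHalfPlane := {z : UpperHalfPlane | z.re = 0} with hI
  have hIne : I.Nonempty := ⟨UpperHalfPlane.I, by rfl⟩
  have hx := x.im_pos
  set A : ℝ := ‖(x : ℂ)‖ with hA
  have hA0 : 0 < A := by
    rw [hA]; apply norm_pos_iff.mpr
    intro h
    have := x.im_pos
    rw [← UpperHalfPlane.coe_im, h] at this
    simp at this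
  set r : ℝ := |x.re| / x.im with hr
  have hr0 : 0 ≤ r := div_nonneg (abs_nonneg _) hx.le
  set s0 : ℝ := infDist x I with hs0def
  have hs00 : 0 ≤ s0 := infDist_nonneg
  set c : ℝ := Real.cosh s0 with hc
  have hc1 : 1 ≤ c := Real.one_le_cosh s0
  -- A / x.im ≤ c
  have hsqrtA : Real.sqrt (1 + r ^ 2) = A / x.im := by
    have habs : A ^ 2 = x.re ^ 2 + x.im ^ 2 := by
      rw [hA, Complex.sq_norm, Complex.normSq_apply, UpperHalfPlane.coe_re,
        UpperHalfPlane.coe_im]; ring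
    have : 1 + r ^ 2 = (A / x.im) ^ 2 := by
      rw [hr, div_pow, div_pow, sq_abs, habs]
      field_simp
      ring
    rw [this, Real.sqrt_sq (by positivity)]
  have hrs0 : Real.arsinh r ≤ s0 := by
    by_contra h
    push_neg at h
    obtain ⟨z, hzI, hzlt⟩ := (infDist_lt_iff hIne).mp h
    exact absurd (arsinh_le_dist_axis x z hzI) (by linarith)
  have hAc : A / x.im ≤ c := by
    rw [← hsqrtA, ← Real.cosh_arsinh, hc]
    rw [Real.cosh_le_cosh, abs_of_nonneg (Real.arsinh_nonneg_iff.mpr hr0),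
      abs_of_nonneg hs00]
    exact hrs0
  -- distance bound : dist (T • x) x ≤ |ℓ| * c
  have hw : ((T • x : UpperHalfPlane) : ℂ) = Real.exp ℓ * (x : ℂ) :=
    transvection_coe ℓ T hT x
  have him : (T • x : UpperHalfPlane).im = Real.exp ℓ * x.im := by
    rw [← UpperHalfPlane.coe_im, hw]
    simp only [Complex.mul_im, Complex.ofReal_re, Complex.ofReal_im, UpperHalfPlane.coe_im]
    ring
  have hdist : dist (T • x) x =
      2 * Real.arsinh (|Real.sinh (ℓ / 2)| * (A / x.im)) := by
    rw [UpperHalfPlane.dist_eq, him]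
    have hd : dist ((T • x : UpperHalfPlane) : ℂ) (x : ℂ) = |Real.exp ℓ - 1| * A := by
      rw [Complex.dist_eq, hw, show (↑(Real.exp ℓ) * ↑x - ↑x : ℂ)
          = ((Real.exp ℓ - 1 : ℝ) : ℂ) * ↑x by push_cast; ring, norm_mul,
        Complex.norm_real, Real.norm_eq_abs, hA]
    have hsq : Real.exp ℓ * x.im * x.im = (Real.exp (ℓ / 2) * x.im) ^ 2 := by
      rw [show Real.exp ℓ = Real.exp (ℓ / 2) * Real.exp (ℓ / 2) by
        rw [← Real.exp_add]; ring_nf]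
      ring
    rw [hd, hsq, Real.sqrt_sq (by positivity)]
    congr 1
    have habs : |Real.exp ℓ - 1| = Real.exp (ℓ / 2) * (2 * |Real.sinh (ℓ / 2)|) := by
      have : Real.exp ℓ - 1 = Real.exp (ℓ / 2) * (2 * Real.sinh (ℓ / 2)) := by
        rw [Real.sinh_eq, Real.exp_neg, show Real.exp ℓ
          = Real.exp (ℓ / 2) * Real.exp (ℓ / 2) by rw [← Real.exp_add]; ring_nf]
        field_simp
      rw [this, abs_mul, abs_of_pos (Real.exp_pos _), abs_mul, abs_two]
    rw [habs]
    field_simp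
  have hsinha : |Real.sinh (ℓ / 2)| = Real.sinh (|ℓ| / 2) := by
    rw [abs_sinh', abs_div, abs_two]
  have hdb : dist (T • x) x ≤ |ℓ| * c := by
    rw [hdist, hsinha]
    have hsn : 0 ≤ Real.sinh (|ℓ| / 2) := by
      rw [← Real.sinh_zero]
      exact Real.sinh_le_sinh.mpr (by positivity)
    have h1 : Real.sinh (|ℓ| / 2) * (A / x.im) ≤ Real.sinh (|ℓ| / 2) * c :=
      mul_le_mul_of_nonneg_left hAc hsn
    have h2 : Real.sinh (|ℓ| / 2) * c ≤ Real.sinh (c * (|ℓ| / 2)) := by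
      have := sinh_superhom' hc1 (show (0:ℝ) ≤ |ℓ| / 2 by positivity)
      linarith [this]
    calc 2 * Real.arsinh (Real.sinh (|ℓ| / 2) * (A / x.im))
        ≤ 2 * Real.arsinh (Real.sinh (c * (|ℓ| / 2))) := by
          apply mul_le_mul_of_nonneg_left _ (by norm_num)
          exact Real.arsinh_le_arsinh.mpr (le_trans h1 h2)
      _ = 2 * (c * (|ℓ| / 2)) := by rw [Real.arsinh_sinh]
      _ = |ℓ| * c := by ring
  -- cosh ≤ exp
  have hce : c ≤ Real.exp s0 := by
    rw [hc, Real.cosh_eq]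
    have : Real.exp (-s0) ≤ Real.exp s0 := Real.exp_le_exp.mpr (by linarith)
    linarith
  -- conclude
  have htri : s0 ≤ infDist xhat I + dist xhat x := by
    rw [hs0def]
    calc infDist x I ≤ infDist xhat I + dist x xhat := infDist_le_infDist_add_dist
      _ = infDist xhat I + dist xhat x := by rw [dist_comm]
  have hexp : Real.exp s0 * Real.exp (-dist xhat x) ≤ Real.exp (infDist xhat I) := by
    rw [← Real.exp_add]
    exact Real.exp_le_exp.mpr (by linarith)
  calc dist (T • x) x * Real.exp (-dist xhat x)
      ≤ (|ℓ| * Real.exp s0) * Real.exp (-dist xhat x) := by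
        apply mul_le_mul_of_nonneg_right _ (Real.exp_pos _).le
        exact le_trans hdb (mul_le_mul_of_nonneg_left hce (abs_nonneg _))
    _ = |ℓ| * (Real.exp s0 * Real.exp (-dist xhat x)) := by ring
    _ ≤ |ℓ| * Real.exp (infDist xhat I) := mul_le_mul_of_nonneg_left hexp (abs_nonneg _)
end

section
/- (Norm bound for a parabolic, instance of equation (7.1) of the paper.) Let c ∈ ℝ and let P ∈ SL(2,ℝ) be the upper-triangular unipotent matrix with top-right entry c, so that P acts on ℍ by z ↦ z + c. Then for every z ∈ ℍ one has dist(P•z, z) ≤ |c|·exp(dist(i, z)), where i denotes the point of ℍ with real part 0 and imaginary part 1. (Equivalently, ‖P‖_{i} := d_i(id, P) is at most |c|, the hyperbolic length of the horocyclic segment based at ∞ joining i and i + c.) -/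
open Metric

/-- Norm bound for a parabolic (instance of equation (7.1) of the paper): if
`P = !![1, c; 0, 1]`, acting on `ℍ` by `z ↦ z + c`, then for every `z ∈ ℍ`,
`dist (P • z) z ≤ |c| * exp (dist i z)`; i.e. `‖P‖_i ≤ |c|`, the hyperbolic
length of the horocyclic segment based at `∞` joining `i` and `i + c`. -/
theorem parabolic_norm_bound
    (c : ℝ) (P : Matrix.SpecialLinearGroup (Fin 2) ℝ)
    (hP : (P : Matrix (Fin 2) (Fin 2) ℝ) = !![1, c; 0, 1]) :
    ∀ z : UpperHalfPlane,
      dist (P • z) z ≤ |c| * Real.exp (dist UpperHalfPlane.I z) := by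
  intro z
  have hcoe : ((P • z : UpperHalfPlane) : ℂ) = (z : ℂ) + c := by
    rw [UpperHalfPlane.specialLinearGroup_apply]
    simp [hP]
  have him : (P • z).im = z.im := by
    have := congrArg Complex.im hcoe
    simpa [UpperHalfPlane.coe_im] using this
  have h1 : dist (P • z) z ≤ dist ((P • z : UpperHalfPlane) : ℂ) (z : ℂ) / Real.sqrt ((P • z).im * z.im) :=
    UpperHalfPlane.dist_le_dist_coe_div_sqrt _ _
  have h2 : dist ((P • z : UpperHalfPlane) : ℂ) (z : ℂ) = |c| := by
    rw [hcoe, Complex.dist_eq]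
    simp [Complex.norm_real]
  have h3 : Real.sqrt ((P • z).im * z.im) = z.im := by
    rw [him]
    exact Real.sqrt_mul_self z.im_pos.le
  have h4 : (1:ℝ) ≤ z.im * Real.exp (dist UpperHalfPlane.I z) := by
    have := UpperHalfPlane.im_le_im_mul_exp_dist UpperHalfPlane.I z
    simpa using this
  calc dist (P • z) z ≤ |c| / z.im := by rw [h2, h3] at h1; exact h1
    _ ≤ |c| * Real.exp (dist UpperHalfPlane.I z) := by
        rw [div_le_iff₀ z.im_pos]
        calc |c| = |c| * 1 := (mul_one _).symm
          _ ≤ |c| * (z.im * Real.exp (dist UpperHalfPlane.I z)) := by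
              apply mul_le_mul_of_nonneg_left h4 (abs_nonneg c)
          _ = |c| * Real.exp (dist UpperHalfPlane.I z) * z.im := by ring
end
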